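/- Write the characteristic polynomial of A as xⁿ + c₁ xⁿ⁻¹ + c₂ xⁿ⁻² + ⋯ + c_{n−1} x + cₙ with integer coefficients cᵢ. Then cᵢ is even for every odd index i with 1 ≤ i ≤ n. -/

import Mathlib

open Matrix Polynomial Equiv Finset

lemma even_card_support_of_sq_eq_one {α : Type*} [Fintype α] [DecidableEq α]
    {σ : Equiv.Perm α} (h : σ * σ = 1) : Even σ.support.card := by
  have hord : orderOf σ ∣ 2 := orderOf_dvd_of_pow_eq_one (by rwa [pow_two])
  rw [← Equiv.Perm.sum_cycleType]
  have hdvd2 : 2 ∣ σ.cycleType.sum := by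
    apply Multiset.dvd_sum
    intro x hx
    have h2 : 2 ≤ x := Equiv.Perm.two_le_of_mem_cycleType hx
    have hdvd : x ∣ 2 :=
      dvd_trans (by rw [← Equiv.Perm.lcm_cycleType]; exact Multiset.dvd_lcm hx) hord
    have := Nat.le_of_dvd (by norm_num) hdvd
    interval_cases x
    · exact dvd_rfl
  obtain ⟨t, ht⟩ := hdvd2
  exact ⟨t, by omega⟩

lemma key_zmod (n : ℕ) (B : Matrix (Fin n) (Fin n) (ZMod 2))
    (hs : ∀ i j, B i j = B j i) (hd : ∀ i, B i i = 0)
    (k : ℕ) (hk : Odd k) (hk2 : k ≤ n) :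
    B.charpoly.coeff (n - k) = 0 := by
  classical
  set N := charmatrix B with hNdef
  have hN : ∀ i j, N i j = if i = j then (X : (ZMod 2)[X]) else C (B i j) := by
    intro i j
    by_cases h : i = j
    · subst h
      simp [hNdef, charmatrix_apply_eq, hd]
    · rw [hNdef, charmatrix_apply_ne _ _ _ h, if_neg h, CharTwo.neg_eq]
  have hNsymm : ∀ i j, N i j = N j i := by
    intro i j
    rw [hN, hN, hs]
    by_cases h : i = j
    · simp [h]
    · rw [if_neg h, if_neg (Ne.symm h)]
  have hdet : B.charpoly = ∑ σ : Equiv.Perm (Fin n), ∏ i, N (σ i) i := by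
    rw [Matrix.charpoly, Matrix.det_apply]
    refine Finset.sum_congr rfl fun σ _ => ?_
    rcases Int.units_eq_one_or (Equiv.Perm.sign σ) with h | h <;> rw [h]
    · simp [hNdef]
    · simp [CharTwo.neg_eq, hNdef]
  rw [hdet, Polynomial.finset_sum_coeff]
  set f : Equiv.Perm (Fin n) → ZMod 2 := fun σ => (∏ i, N (σ i) i).coeff (n - k) with hfdef
  have hfsym : ∀ σ : Equiv.Perm (Fin n), f σ⁻¹ = f σ := by
    intro σ
    have : ∏ i, N (σ⁻¹ i) i = ∏ i, N (σ i) i := by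
      rw [← Equiv.prod_comp σ (fun i => N (σ⁻¹ i) i)]
      refine Finset.prod_congr rfl fun i _ => ?_
      rw [show σ⁻¹ (σ i) = i from σ.symm_apply_apply i, hNsymm]
    simp only [hfdef, this]
  rw [← Finset.sum_filter_add_sum_filter_not Finset.univ (fun σ => σ * σ = 1) f]
  have h1 : ∑ σ ∈ Finset.univ.filter (fun σ => σ * σ = 1), f σ = 0 := by
    refine Finset.sum_eq_zero fun σ hσ => ?_
    rw [Finset.mem_filter] at hσ
    have hinv : ∀ i, σ (σ i) = i := fun i => by
      have := congrArg (fun τ : Equiv.Perm (Fin n) => τ i) hσ.2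
      simpa using this
    have hsplit : ∏ i, N (σ i) i =
        X ^ (Finset.univ.filter (fun i => σ i = i)).card *
          C (∏ i ∈ Finset.univ.filter (fun i => ¬ σ i = i), B (σ i) i) := by
      rw [← Finset.prod_filter_mul_prod_filter_not Finset.univ (fun i => σ i = i)]
      congr 1
      · rw [Finset.prod_congr rfl (fun i hi => ?_), Finset.prod_const]
        rw [Finset.mem_filter] at hi
        rw [hi.2, hN, if_pos rfl]
      · rw [map_prod]
        refine Finset.prod_congr rfl fun i hi => ?_
        rw [Finset.mem_filter] at hi
        rw [hN, if_neg hi.2]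
    have hm : (Finset.univ.filter (fun i => σ i = i)).card +
        (Finset.univ.filter (fun i => ¬ σ i = i)).card = n := by
      rw [Finset.card_filter_add_card_filter_not]
      simp
    have heven : Even (Finset.univ.filter (fun i => ¬ σ i = i)).card := by
      have : (Finset.univ.filter (fun i => ¬ σ i = i)) = σ.support := by
        ext i; simp [Equiv.Perm.mem_support]
      rw [this]
      exact even_card_support_of_sq_eq_one hσ.2
    have hne : n - k ≠ (Finset.univ.filter (fun i => σ i = i)).card := by
      obtain ⟨a, ha⟩ := heven
      obtain ⟨b, hb⟩ := hk
      omega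
    show (∏ i, N (σ i) i).coeff (n - k) = 0
    rw [hsplit, mul_comm, Polynomial.coeff_C_mul, Polynomial.coeff_X_pow, if_neg hne, mul_zero]
  have h2 : ∑ σ ∈ Finset.univ.filter (fun σ => ¬ σ * σ = 1), f σ = 0 := by
    refine Finset.sum_involution (fun σ _ => σ⁻¹) (fun σ hσ => ?_) (fun σ hσ hf => ?_)
      (fun σ hσ => ?_) (fun σ hσ => ?_)
    · rw [hfsym]; exact CharTwo.add_self_eq_zero _
    · rw [Finset.mem_filter] at hσ
      intro h
      have h' : σ⁻¹ = σ := h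
      refine hσ.2 ?_
      calc σ * σ = σ⁻¹ * σ := by rw [h']
        _ = 1 := inv_mul_cancel σ
    · rw [Finset.mem_filter] at hσ ⊢
      refine ⟨Finset.mem_univ _, fun h => ?_⟩
      apply hσ.2
      have := congrArg (fun τ : Equiv.Perm (Fin n) => τ⁻¹) h
      simpa [_root_.mul_inv_rev] using this
    · exact inv_inv σ
  rw [h1, h2, add_zero]

theorem stmt_18 (n : ℕ) (hn : 0 < n)
    (A : Matrix (Fin n) (Fin n) ℤ)
    (hA_symm : Aᵀ = A)
    (hA_diag : ∀ i, A i i = 0)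
    (hA_01 : ∀ i j, A i j = 0 ∨ A i j = 1)
    (c : ℕ → ℤ) (hc : ∀ i, 1 ≤ i → i ≤ n → c i = A.charpoly.coeff (n - i)) :
    ∀ i, Odd i → 1 ≤ i → i ≤ n → Even (c i) := by
  intro i hi h1 h2
  rw [hc i h1 h2]
  set B : Matrix (Fin n) (Fin n) (ZMod 2) := A.map (Int.castRingHom (ZMod 2)) with hBdef
  have hBsymm : ∀ a b, B a b = B b a := by
    intro a b
    have h3 : A a b = A b a := (congrFun (congrFun hA_symm a) b).symm
    simp [hBdef, Matrix.map_apply, h3]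
  have hBdiag : ∀ a, B a a = 0 := by
    intro a; simp [hBdef, Matrix.map_apply, hA_diag a]
  have hkey := key_zmod n B hBsymm hBdiag i hi h2
  rw [hBdef, Matrix.charpoly_map, Polynomial.coeff_map] at hkey
  have hkey' : ((A.charpoly.coeff (n - i) : ℤ) : ZMod 2) = 0 := hkey
  obtain ⟨t, ht⟩ := (ZMod.intCast_zmod_eq_zero_iff_dvd _ 2).mp hkey'
  exact ⟨t, by omega⟩
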